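/- arXiv:2605.05645 — 8 statements merged into one kernel-verified Lean document; each statement's English description precedes it below -/
import Mathlib

section
/- Let s ≥ 1, let M be an s×s real lower triangular matrix, and suppose the symmetric part S(M) := (M + Mᵀ)/2 satisfies xᵀ S(M) x ≥ λ |x|² for all x ∈ ℝˢ, for some constant λ > 0. Then for any vectors v₁, …, v_s in a real inner product space and any 1 ≤ k ≤ s, one has Σ_{i=1}^{k} Σ_{j=1}^{i} M_{ij} ⟨v_j, v_i⟩ ≥ λ Σ_{i=1}^{k} ‖v_i‖². -/
open scoped RealInnerProductSpace

/-- Part (i) of the quadratic-form lemma (Lemma 2.2): if the symmetric part of a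
lower triangular matrix `M` has quadratic form bounded below by `lam` times the
Euclidean norm squared, then the convolution-type quadratic form of vectors in a
real inner product space is bounded below by `lam` times the sum of squared norms. -/
theorem ierk_quadratic_form_lower_bound
    {E : Type*} [NormedAddCommGroup E] [InnerProductSpace ℝ E]
    (s : ℕ) (hs : 1 ≤ s) (M : Matrix (Fin s) (Fin s) ℝ)
    (hlow : ∀ i j : Fin s, i < j → M i j = 0)
    (lam : ℝ) (hlam : 0 < lam)
    (hquad : ∀ x : Fin s → ℝ,
      lam * ∑ i, (x i) ^ 2 ≤ ∑ i, ∑ j, ((M i j + M j i) / 2) * x i * x j)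
    (v : Fin s → E) (k : ℕ) (hk1 : 1 ≤ k) (hks : k ≤ s) :
    lam * ∑ i ∈ Finset.univ.filter (fun i : Fin s => (i : ℕ) < k), ‖v i‖ ^ 2 ≤
      ∑ i ∈ Finset.univ.filter (fun i : Fin s => (i : ℕ) < k),
        ∑ j ∈ Finset.Iic i, M i j * ⟪v j, v i⟫ := by
  classical
  set F := Submodule.span ℝ (Set.range v) with hF
  haveI : FiniteDimensional ℝ F := FiniteDimensional.span_of_finite ℝ (Set.finite_range v)
  set n := Module.finrank ℝ F with hn
  let b := stdOrthonormalBasis ℝ F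
  let u : Fin s → F := fun i => ⟨v i, Submodule.subset_span (Set.mem_range_self i)⟩
  let c : Fin s → Fin n → ℝ := fun i m => b.repr (u i) m
  have hinner : ∀ i j : Fin s, ⟪v j, v i⟫ = ∑ m, c j m * c i m := by
    intro i j
    have h1 : ⟪v j, v i⟫ = ⟪u j, u i⟫ := rfl
    rw [h1, ← b.sum_inner_mul_inner (u j) (u i)]
    refine Finset.sum_congr rfl fun m _ => ?_
    simp only [c, b.repr_apply_apply]
    rw [real_inner_comm]
  have hnorm : ∀ i : Fin s, ‖v i‖ ^ 2 = ∑ m, c i m ^ 2 := by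
    intro i
    have : ⟪v i, v i⟫ = ∑ m, c i m * c i m := hinner i i
    rw [real_inner_self_eq_norm_sq] at this
    simpa [sq] using this
  -- coordinate vectors
  let x : Fin n → Fin s → ℝ := fun m i => if (i : ℕ) < k then c i m else 0
  have key : ∀ m : Fin n,
      lam * ∑ i ∈ Finset.univ.filter (fun i : Fin s => (i : ℕ) < k), c i m ^ 2 ≤
        ∑ i ∈ Finset.univ.filter (fun i : Fin s => (i : ℕ) < k),
          ∑ j ∈ Finset.Iic i, M i j * (c j m * c i m) := by
    intro m
    have h := hquad (x m)
    have hL : ∑ i, (x m i) ^ 2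
        = ∑ i ∈ Finset.univ.filter (fun i : Fin s => (i : ℕ) < k), c i m ^ 2 := by
      rw [Finset.sum_filter]
      refine Finset.sum_congr rfl fun i _ => ?_
      by_cases hi : (i : ℕ) < k <;> simp [x, hi]
    -- symmetrize
    have hsym : ∑ i, ∑ j, ((M i j + M j i) / 2) * x m i * x m j
        = ∑ i, ∑ j, M i j * x m i * x m j := by
      have hswap : ∑ i, ∑ j, M j i * x m i * x m j
          = ∑ i, ∑ j, M i j * x m i * x m j := by
        rw [Finset.sum_comm]
        refine Finset.sum_congr rfl fun i _ => Finset.sum_congr rfl fun j _ => by ring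
      calc ∑ i, ∑ j, ((M i j + M j i) / 2) * x m i * x m j
          = ∑ i, ∑ j, (M i j * x m i * x m j / 2 + M j i * x m i * x m j / 2) := by
            refine Finset.sum_congr rfl fun i _ => Finset.sum_congr rfl fun j _ => by ring
        _ = (∑ i, ∑ j, M i j * x m i * x m j) / 2
            + (∑ i, ∑ j, M j i * x m i * x m j) / 2 := by
            simp [Finset.sum_add_distrib, Finset.sum_div]
        _ = ∑ i, ∑ j, M i j * x m i * x m j := by rw [hswap]; ring
    have hR : ∑ i, ∑ j, M i j * x m i * x m j
        = ∑ i ∈ Finset.univ.filter (fun i : Fin s => (i : ℕ) < k),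
            ∑ j ∈ Finset.Iic i, M i j * (c j m * c i m) := by
      rw [Finset.sum_filter]
      refine Finset.sum_congr rfl fun i _ => ?_
      by_cases hi : (i : ℕ) < k
      · simp only [hi, if_true]
        rw [← Finset.sum_subset (Finset.subset_univ (Finset.Iic i))]
        · refine Finset.sum_congr rfl fun j hj => ?_
          have hji : (j : ℕ) ≤ (i : ℕ) := Fin.le_def.mp (Finset.mem_Iic.mp hj)
          have hjk : (j : ℕ) < k := lt_of_le_of_lt hji hi
          simp [x, hi, hjk]; ring
        · intro j _ hj
          have : i < j := by
            simp only [Finset.mem_Iic, not_le] at hj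
            exact hj
          simp [hlow i j this]
      · simp only [hi, if_false]
        refine Finset.sum_eq_zero fun j _ => ?_
        simp [x, hi]
    rw [hL, hsym, hR] at h
    exact h
  have hsum := Finset.sum_le_sum (fun m (_ : m ∈ (Finset.univ : Finset (Fin n))) => key m)
  calc lam * ∑ i ∈ Finset.univ.filter (fun i : Fin s => (i : ℕ) < k), ‖v i‖ ^ 2
      = ∑ m : Fin n, lam * ∑ i ∈ Finset.univ.filter (fun i : Fin s => (i : ℕ) < k), c i m ^ 2 := by
        rw [← Finset.mul_sum]
        congr 1
        rw [Finset.sum_comm]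
        exact Finset.sum_congr rfl fun i _ => hnorm i
    _ ≤ ∑ m : Fin n, ∑ i ∈ Finset.univ.filter (fun i : Fin s => (i : ℕ) < k),
          ∑ j ∈ Finset.Iic i, M i j * (c j m * c i m) := hsum
    _ = ∑ i ∈ Finset.univ.filter (fun i : Fin s => (i : ℕ) < k),
          ∑ j ∈ Finset.Iic i, M i j * ⟪v j, v i⟫ := by
        rw [Finset.sum_comm]
        refine Finset.sum_congr rfl fun i _ => ?_
        rw [Finset.sum_comm]
        refine Finset.sum_congr rfl fun j _ => ?_
        rw [hinner i j, Finset.mul_sum]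
end

section
/- Let s ≥ 1 and let M be an s×s real lower triangular matrix whose spectral norm (operator norm with respect to the Euclidean norm on ℝˢ) is at most σ > 0. Then for any vectors v₁, …, v_s and u₁, …, u_s in a real inner product space and any 1 ≤ k ≤ s, one has Σ_{i=1}^{k} Σ_{j=1}^{i} M_{ij} ⟨v_j, u_i⟩ ≤ σ (Σ_{i=1}^{k} ‖v_i‖²)^{1/2} (Σ_{i=1}^{k} ‖u_i‖²)^{1/2}. -/
open scoped RealInnerProductSpace

private lemma ierk_cs_aux {ι : Type*} (t : Finset ι) (f g : ι → ℝ) :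
    ∑ i ∈ t, f i * g i ≤
      Real.sqrt (∑ i ∈ t, f i ^ 2) * Real.sqrt (∑ i ∈ t, g i ^ 2) := by
  calc ∑ i ∈ t, f i * g i ≤ |∑ i ∈ t, f i * g i| := le_abs_self _
    _ = Real.sqrt ((∑ i ∈ t, f i * g i) ^ 2) := (Real.sqrt_sq_eq_abs _).symm
    _ ≤ Real.sqrt ((∑ i ∈ t, f i ^ 2) * ∑ i ∈ t, g i ^ 2) :=
        Real.sqrt_le_sqrt (Finset.sum_mul_sq_le_sq_mul_sq t f g)
    _ = _ := Real.sqrt_mul (by positivity) _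

/-- Part (ii) of the quadratic-form lemma (Lemma 2.2): a Cauchy–Schwarz type bound
for the convolution quadratic form of a lower triangular matrix with spectral norm
at most `σ`, applied to vectors in a real inner product space. -/
theorem ierk_quadratic_form_cauchy_schwarz
    {E : Type*} [NormedAddCommGroup E] [InnerProductSpace ℝ E]
    (s : ℕ) (hs : 1 ≤ s) (M : Matrix (Fin s) (Fin s) ℝ)
    (hlow : ∀ i j : Fin s, i < j → M i j = 0)
    (σ : ℝ) (hσpos : 0 < σ)
    (hσ : ∀ x : Fin s → ℝ,
      Real.sqrt (∑ i, (∑ j, M i j * x j) ^ 2) ≤ σ * Real.sqrt (∑ i, (x i) ^ 2))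
    (v u : Fin s → E) (k : ℕ) (hk1 : 1 ≤ k) (hks : k ≤ s) :
    ∑ i ∈ Finset.univ.filter (fun i : Fin s => (i : ℕ) < k),
        ∑ j ∈ Finset.Iic i, M i j * ⟪v j, u i⟫ ≤
      σ * Real.sqrt (∑ i ∈ Finset.univ.filter (fun i : Fin s => (i : ℕ) < k), ‖v i‖ ^ 2) *
        Real.sqrt (∑ i ∈ Finset.univ.filter (fun i : Fin s => (i : ℕ) < k), ‖u i‖ ^ 2) := by
  classical
  set v' : Fin s → E := fun i => if (i : ℕ) < k then v i else 0 with hv'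
  set u' : Fin s → E := fun i => if (i : ℕ) < k then u i else 0 with hu'
  -- Gram matrix of the combined family
  set w : Fin s ⊕ Fin s → E := Sum.elim v' u' with hw
  set G : Matrix (Fin s ⊕ Fin s) (Fin s ⊕ Fin s) ℝ := fun p q => ⟪w p, w q⟫ with hG
  have hGpsd : G.PosSemidef := by
    refine Matrix.posSemidef_iff_dotProduct_mulVec.mpr ⟨?_, ?_⟩
    · ext p q
      simp only [Matrix.conjTranspose_apply, hG, star_trivial]
      exact real_inner_comm _ _
    · intro x
      have key : dotProduct (star x) (G.mulVec x) = ⟪∑ p, x p • w p, ∑ q, x q • w q⟫ := by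
        simp only [dotProduct, Matrix.mulVec, hG, star_trivial, sum_inner, inner_sum,
          real_inner_smul_left, real_inner_smul_right, Finset.mul_sum]
        exact Finset.sum_congr rfl fun p _ => Finset.sum_congr rfl fun q _ => by
          rw [real_inner_comm (w q) (w p)]; ring
      rw [key]
      exact real_inner_self_nonneg
  obtain ⟨B, hB⟩ : ∃ B : Matrix (Fin s ⊕ Fin s) (Fin s ⊕ Fin s) ℝ, G = Matrix.conjTranspose B * B := by
    open scoped MatrixOrder in
    obtain ⟨X, hX, -, hXe⟩ := CFC.exists_sqrt_of_isSelfAdjoint_of_quasispectrumRestricts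
      hGpsd.isHermitian (QuasispectrumRestricts.nnreal_of_nonneg hGpsd.nonneg)
    exact ⟨X, by rw [← Matrix.star_eq_conjTranspose, hX.star_eq]; exact hXe.symm⟩
  set a : (Fin s ⊕ Fin s) → Fin s → ℝ := fun m j => B m (Sum.inl j) with ha
  set b : (Fin s ⊕ Fin s) → Fin s → ℝ := fun m i => B m (Sum.inr i) with hb
  have hGent : ∀ p q, ⟪w p, w q⟫ = ∑ m, B m p * B m q := by
    intro p q
    have := congrFun (congrFun hB p) q
    simpa [Matrix.mul_apply, Matrix.conjTranspose_apply, hG] using this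
  have hvu : ∀ j i, ⟪v' j, u' i⟫ = ∑ m, a m j * b m i := fun j i =>
    hGent (Sum.inl j) (Sum.inr i)
  have hvsq : ∀ j, ‖v' j‖ ^ 2 = ∑ m, a m j ^ 2 := by
    intro j
    have := hGent (Sum.inl j) (Sum.inl j)
    simpa [real_inner_self_eq_norm_sq, sq, hw, ha] using this
  have husq : ∀ i, ‖u' i‖ ^ 2 = ∑ m, b m i ^ 2 := by
    intro i
    have := hGent (Sum.inr i) (Sum.inr i)
    simpa [real_inner_self_eq_norm_sq, sq, hw, hb] using this
  -- rewrite LHS as a full double sum over truncated vectors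
  have hLHS : ∑ i ∈ Finset.univ.filter (fun i : Fin s => (i : ℕ) < k),
        ∑ j ∈ Finset.Iic i, M i j * ⟪v j, u i⟫
      = ∑ i : Fin s, ∑ j : Fin s, M i j * ⟪v' j, u' i⟫ := by
    rw [← Finset.sum_filter_add_sum_filter_not Finset.univ (fun i : Fin s => (i : ℕ) < k)
        (fun i => ∑ j : Fin s, M i j * ⟪v' j, u' i⟫)]
    have h2 : ∑ i ∈ Finset.univ.filter (fun i : Fin s => ¬ (i : ℕ) < k),
        ∑ j : Fin s, M i j * ⟪v' j, u' i⟫ = 0 := by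
      refine Finset.sum_eq_zero fun i hi => Finset.sum_eq_zero fun j _ => ?_
      simp only [Finset.mem_filter] at hi
      simp [hu', if_neg hi.2]
    rw [h2, add_zero]
    refine Finset.sum_congr rfl fun i hi => ?_
    simp only [Finset.mem_filter] at hi
    rw [← Finset.sum_subset (Finset.subset_univ (Finset.Iic i))
      (fun j _ hj => by
        simp only [Finset.mem_Iic, not_le] at hj
        rw [hlow i j hj, zero_mul])]
    refine Finset.sum_congr rfl fun j hj => ?_
    simp only [Finset.mem_Iic] at hj
    have hjk : (j : ℕ) < k := lt_of_le_of_lt (Fin.le_iff_val_le_val.mp hj) hi.2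
    simp [hv', hu', if_pos hjk, if_pos hi.2]
  have hVS : ∑ i ∈ Finset.univ.filter (fun i : Fin s => (i : ℕ) < k), ‖v i‖ ^ 2
      = ∑ i : Fin s, ‖v' i‖ ^ 2 := by
    rw [Finset.sum_filter]
    refine Finset.sum_congr rfl fun i _ => ?_
    by_cases h : (i : ℕ) < k
    · simp [hv', h]
    · simp [hv', h]
  have hUS : ∑ i ∈ Finset.univ.filter (fun i : Fin s => (i : ℕ) < k), ‖u i‖ ^ 2
      = ∑ i : Fin s, ‖u' i‖ ^ 2 := by
    rw [Finset.sum_filter]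
    refine Finset.sum_congr rfl fun i _ => ?_
    by_cases h : (i : ℕ) < k
    · simp [hu', h]
    · simp [hu', h]
  rw [hLHS, hVS, hUS]
  -- main computation
  have hswap : ∑ i : Fin s, ∑ j : Fin s, M i j * ⟪v' j, u' i⟫
      = ∑ m : Fin s ⊕ Fin s, ∑ i : Fin s, (∑ j : Fin s, M i j * a m j) * b m i := by
    calc ∑ i : Fin s, ∑ j : Fin s, M i j * ⟪v' j, u' i⟫
        = ∑ i : Fin s, ∑ m : Fin s ⊕ Fin s, ∑ j : Fin s, M i j * (a m j * b m i) := by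
          refine Finset.sum_congr rfl fun i _ => ?_
          rw [← Finset.sum_comm]
          exact Finset.sum_congr rfl fun j _ => by rw [hvu, Finset.mul_sum]
      _ = ∑ m : Fin s ⊕ Fin s, ∑ i : Fin s, ∑ j : Fin s, M i j * (a m j * b m i) :=
          Finset.sum_comm
      _ = ∑ m : Fin s ⊕ Fin s, ∑ i : Fin s, (∑ j : Fin s, M i j * a m j) * b m i := by
          refine Finset.sum_congr rfl fun m _ => Finset.sum_congr rfl fun i _ => ?_
          rw [Finset.sum_mul]
          exact Finset.sum_congr rfl fun j _ => by ring
  rw [hswap]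
  have hterm : ∀ m : Fin s ⊕ Fin s,
      ∑ i : Fin s, (∑ j : Fin s, M i j * a m j) * b m i ≤
        σ * (Real.sqrt (∑ j, a m j ^ 2) * Real.sqrt (∑ i, b m i ^ 2)) := by
    intro m
    calc ∑ i : Fin s, (∑ j : Fin s, M i j * a m j) * b m i
        ≤ Real.sqrt (∑ i, (∑ j, M i j * a m j) ^ 2) * Real.sqrt (∑ i, b m i ^ 2) :=
          ierk_cs_aux _ _ _
      _ ≤ (σ * Real.sqrt (∑ j, a m j ^ 2)) * Real.sqrt (∑ i, b m i ^ 2) :=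
          mul_le_mul_of_nonneg_right (hσ (a m)) (Real.sqrt_nonneg _)
      _ = σ * (Real.sqrt (∑ j, a m j ^ 2) * Real.sqrt (∑ i, b m i ^ 2)) := by ring
  calc ∑ m : Fin s ⊕ Fin s, ∑ i : Fin s, (∑ j : Fin s, M i j * a m j) * b m i
      ≤ ∑ m : Fin s ⊕ Fin s,
          σ * (Real.sqrt (∑ j, a m j ^ 2) * Real.sqrt (∑ i, b m i ^ 2)) :=
        Finset.sum_le_sum fun m _ => hterm m
    _ = σ * ∑ m : Fin s ⊕ Fin s,
          Real.sqrt (∑ j, a m j ^ 2) * Real.sqrt (∑ i, b m i ^ 2) := by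
        rw [Finset.mul_sum]
    _ ≤ σ * (Real.sqrt (∑ m, Real.sqrt (∑ j, a m j ^ 2) ^ 2) *
          Real.sqrt (∑ m, Real.sqrt (∑ i, b m i ^ 2) ^ 2)) := by
        exact mul_le_mul_of_nonneg_left (ierk_cs_aux _ _ _) hσpos.le
    _ = σ * Real.sqrt (∑ i : Fin s, ‖v' i‖ ^ 2) * Real.sqrt (∑ i : Fin s, ‖u' i‖ ^ 2) := by
        have h1 : ∑ m : Fin s ⊕ Fin s, Real.sqrt (∑ j, a m j ^ 2) ^ 2
            = ∑ i : Fin s, ‖v' i‖ ^ 2 := by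
          simp_rw [Real.sq_sqrt (Finset.sum_nonneg fun _ _ => sq_nonneg _), hvsq]
          exact Finset.sum_comm
        have h2 : ∑ m : Fin s ⊕ Fin s, Real.sqrt (∑ i, b m i ^ 2) ^ 2
            = ∑ i : Fin s, ‖u' i‖ ^ 2 := by
          simp_rw [Real.sq_sqrt (Finset.sum_nonneg fun _ _ => sq_nonneg _), husq]
          exact Finset.sum_comm
        rw [h1, h2, mul_assoc]
end

section
/- Let s ≥ 1 and let M be an s×s real lower triangular matrix whose spectral norm is at most σ > 0. Let α, β be real numbers with 1 < α, β < ∞ and 1/α + 1/β = 1, and set μ := max{α, β}. Then for any vectors v₁, …, v_s and u₁, …, u_s in a real inner product space and any 1 ≤ k ≤ s, one has Σ_{i=1}^{k} Σ_{j=1}^{i} M_{ij} ⟨v_j, u_i⟩ ≤ k^{1/2 − 1/μ} σ (Σ_{i=1}^{k} ‖v_i‖^α)^{1/α} (Σ_{i=1}^{k} ‖u_i‖^β)^{1/β}. -/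
open scoped RealInnerProductSpace

open Finset in
private lemma aux_l2_le_lp {ι : Type*} (T : Finset ι) (f : ι → ℝ) (hf : ∀ i, 0 ≤ f i)
    {p : ℝ} (hp1 : 0 < p) (hp2 : p ≤ 2) :
    Real.sqrt (∑ i ∈ T, f i ^ 2) ≤ (∑ i ∈ T, f i ^ p) ^ (1 / p) := by
  set S := ∑ i ∈ T, f i ^ p with hS
  have hS0 : 0 ≤ S := sum_nonneg fun i _ => Real.rpow_nonneg (hf i) p
  rcases eq_or_lt_of_le hS0 with h0 | hSpos
  · have hz : ∀ i ∈ T, f i = 0 := by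
      intro i hi
      have h1 : f i ^ p ≤ S := single_le_sum (fun j _ => Real.rpow_nonneg (hf j) p) hi
      have h2 : f i ^ p = 0 :=
        le_antisymm (h0 ▸ h1) (Real.rpow_nonneg (hf i) p)
      exact (Real.rpow_eq_zero (hf i) hp1.ne').mp h2
    have : ∑ i ∈ T, f i ^ 2 = 0 := by
      refine Finset.sum_eq_zero fun i hi => ?_
      rw [hz i hi]; ring
    rw [this, Real.sqrt_zero]
    positivity
  · rw [Real.sqrt_le_iff]
    constructor
    · positivity
    · have key : ∀ i ∈ T, f i ^ 2 ≤ f i ^ p * S ^ ((2 - p) / p) := by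
        intro i hi
        rcases eq_or_lt_of_le (hf i) with h0 | hfi
        · rw [← h0, Real.zero_rpow hp1.ne']
          simp
        · have h1 : f i ^ p ≤ S := single_le_sum (fun j _ => Real.rpow_nonneg (hf j) p) hi
          have h2 : f i ≤ S ^ (1 / p) := by
            have h := Real.rpow_le_rpow (Real.rpow_nonneg (hf i) p) h1
              (le_of_lt (one_div_pos.mpr hp1))
            rwa [← Real.rpow_mul (hf i), mul_one_div, div_self hp1.ne', Real.rpow_one] at h
          have h3 : f i ^ ((2 : ℝ) - p) ≤ (S ^ (1 / p)) ^ ((2 : ℝ) - p) :=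
            Real.rpow_le_rpow (hf i) h2 (by linarith)
          calc f i ^ 2 = f i ^ ((2 : ℕ) : ℝ) := (Real.rpow_natCast _ 2).symm
            _ = f i ^ (p + ((2 : ℝ) - p)) := by norm_num
            _ = f i ^ p * f i ^ ((2 : ℝ) - p) := Real.rpow_add hfi _ _
            _ ≤ f i ^ p * (S ^ (1 / p)) ^ ((2 : ℝ) - p) :=
                mul_le_mul_of_nonneg_left h3 (Real.rpow_nonneg (hf i) p)
            _ = f i ^ p * S ^ ((2 - p) / p) := by
                rw [← Real.rpow_mul hS0]
                congr 1
                ring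
      have hsum : ∑ i ∈ T, f i ^ 2 ≤ S * S ^ ((2 - p) / p) := by
        calc ∑ i ∈ T, f i ^ 2 ≤ ∑ i ∈ T, f i ^ p * S ^ ((2 - p) / p) := sum_le_sum key
          _ = S * S ^ ((2 - p) / p) := by rw [← sum_mul]
      refine hsum.trans (le_of_eq ?_)
      have e1 : S * S ^ ((2 - p) / p) = S ^ (1 + (2 - p) / p) := by
        rw [Real.rpow_add hSpos, Real.rpow_one]
      have e2 : (1 : ℝ) + (2 - p) / p = (1 / p) * 2 := by field_simp; ring
      rw [e1, e2, Real.rpow_mul hS0, Real.rpow_two, sq]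

open Finset in
private lemma aux_l2_le_card_lp {ι : Type*} (T : Finset ι) (f : ι → ℝ) (hf : ∀ i, 0 ≤ f i)
    {p : ℝ} (hp2 : 2 ≤ p) :
    Real.sqrt (∑ i ∈ T, f i ^ 2) ≤
      (T.card : ℝ) ^ ((1 : ℝ) / 2 - 1 / p) * (∑ i ∈ T, f i ^ p) ^ (1 / p) := by
  rcases eq_or_lt_of_le hp2 with h2 | hp
  · subst h2
    have : ∀ i ∈ T, f i ^ (2 : ℝ) = f i ^ 2 := fun i _ => Real.rpow_two (f i)
    rw [Finset.sum_congr rfl this]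
    norm_num
    rw [Real.sqrt_eq_rpow]
  · have hp0 : (0 : ℝ) < p := by linarith
    have hp2' : p - 2 ≠ 0 := by intro h; rw [sub_eq_zero] at h; exact hp.ne' h
    have hpq : Real.HolderConjugate (p / 2) (p / (p - 2)) := by
      rw [Real.holderConjugate_iff]
      constructor
      · linarith
      · rw [inv_div, inv_div]
        field_simp
        ring
    have H := Real.inner_le_Lp_mul_Lq_of_nonneg (s := T) (f := fun i => f i ^ (2 : ℝ))
      (g := fun _ => (1 : ℝ)) hpq (fun i _ => Real.rpow_nonneg (hf i) _)
      (fun i _ => zero_le_one)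
    simp only [mul_one, Real.one_rpow, Finset.sum_const, nsmul_eq_mul] at H
    have hfp : ∀ i ∈ T, (f i ^ (2 : ℝ)) ^ (p / 2) = f i ^ p := by
      intro i _
      rw [← Real.rpow_mul (hf i)]
      congr 1
      ring
    rw [Finset.sum_congr rfl hfp] at H
    have h2r : ∀ i ∈ T, f i ^ (2 : ℝ) = f i ^ 2 := fun i _ => Real.rpow_two (f i)
    rw [Finset.sum_congr rfl h2r] at H
    -- H : ∑ f^2 ≤ (∑ f^p) ^ (1/(p/2)) * (card * 1) ^ (1/(p/(p-2)))
    have hA0 : (0 : ℝ) ≤ ∑ i ∈ T, f i ^ p :=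
      Finset.sum_nonneg fun i _ => Real.rpow_nonneg (hf i) p
    have hcard0 : (0 : ℝ) ≤ (T.card : ℝ) := Nat.cast_nonneg _
    have e1 : Real.sqrt ((∑ i ∈ T, f i ^ p) ^ (1 / (p / 2)))
        = (∑ i ∈ T, f i ^ p) ^ (1 / p) := by
      rw [Real.sqrt_eq_rpow, ← Real.rpow_mul hA0]
      congr 1
      rw [one_div_div]
      ring
    have e2 : Real.sqrt ((T.card : ℝ) ^ (1 / (p / (p - 2))))
        = (T.card : ℝ) ^ ((1 : ℝ) / 2 - 1 / p) := by
      rw [Real.sqrt_eq_rpow, ← Real.rpow_mul hcard0]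
      congr 1
      rw [one_div_div, div_mul_div_comm, div_sub_div 1 1 (two_ne_zero) hp0.ne']
      congr 1 <;> ring
    have hsqrtH := Real.sqrt_le_sqrt H
    refine hsqrtH.trans (le_of_eq ?_)
    rw [Real.sqrt_mul (Real.rpow_nonneg hA0 _), e1, e2, mul_comm]

open Finset in
private lemma aux_bilinear {E : Type*} [NormedAddCommGroup E] [InnerProductSpace ℝ E]
    {s : ℕ} (M : Matrix (Fin s) (Fin s) ℝ) {σ : ℝ} (hσ0 : 0 ≤ σ)
    (hσ : ∀ x : Fin s → ℝ,
      Real.sqrt (∑ i, (∑ j, M i j * x j) ^ 2) ≤ σ * Real.sqrt (∑ i, (x i) ^ 2))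
    (v u : Fin s → E) :
    ∑ i, ∑ j, M i j * ⟪v j, u i⟫ ≤
      σ * (Real.sqrt (∑ j, ‖v j‖ ^ 2) * Real.sqrt (∑ i, ‖u i‖ ^ 2)) := by
  -- scalar bilinear bound
  have scalar : ∀ x y : Fin s → ℝ,
      ∑ i, (∑ j, M i j * x j) * y i ≤
        σ * (Real.sqrt (∑ j, (x j) ^ 2) * Real.sqrt (∑ i, (y i) ^ 2)) := by
    intro x y
    calc ∑ i, (∑ j, M i j * x j) * y i
        ≤ Real.sqrt (∑ i, (∑ j, M i j * x j) ^ 2) * Real.sqrt (∑ i, (y i) ^ 2) :=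
          Real.sum_mul_le_sqrt_mul_sqrt _ _ _
      _ ≤ (σ * Real.sqrt (∑ j, (x j) ^ 2)) * Real.sqrt (∑ i, (y i) ^ 2) :=
          mul_le_mul_of_nonneg_right (hσ x) (Real.sqrt_nonneg _)
      _ = σ * (Real.sqrt (∑ j, (x j) ^ 2) * Real.sqrt (∑ i, (y i) ^ 2)) := by ring
  classical
  set F := Submodule.span ℝ (Set.range v ∪ Set.range u) with hF
  haveI : FiniteDimensional ℝ F :=
    FiniteDimensional.span_of_finite ℝ ((Set.finite_range v).union (Set.finite_range u))
  let b := stdOrthonormalBasis ℝ F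
  let v' : Fin s → F := fun j =>
    ⟨v j, Submodule.subset_span (Set.mem_union_left _ (Set.mem_range_self j))⟩
  let u' : Fin s → F := fun i =>
    ⟨u i, Submodule.subset_span (Set.mem_union_right _ (Set.mem_range_self i))⟩
  let a : Fin s → Fin (Module.finrank ℝ F) → ℝ := fun j t => ⟪v' j, b t⟫
  let c : Fin s → Fin (Module.finrank ℝ F) → ℝ := fun i t => ⟪b t, u' i⟫
  have hinner : ∀ i j : Fin s, ⟪v j, u i⟫ = ∑ t, a j t * c i t := by
    intro i j
    rw [show ⟪v j, u i⟫ = ⟪v' j, u' i⟫ from (Submodule.coe_inner F (v' j) (u' i)).symm]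
    exact (b.sum_inner_mul_inner (v' j) (u' i)).symm
  have hnorm : ∀ x : F, ∑ t, ⟪x, b t⟫ * ⟪b t, x⟫ = ‖(x : E)‖ ^ 2 := by
    intro x
    rw [b.sum_inner_mul_inner x x]
    rw [show ⟪x, x⟫ = ⟪(x : E), (x : E)⟫ from Submodule.coe_inner F x x]
    exact real_inner_self_eq_norm_sq _
  have hna : ∀ j, ∑ t, a j t ^ 2 = ‖v j‖ ^ 2 := by
    intro j
    rw [← hnorm (v' j)]
    refine Finset.sum_congr rfl fun t _ => ?_
    show (⟪v' j, b t⟫ : ℝ) ^ 2 = ⟪v' j, b t⟫ * ⟪b t, v' j⟫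
    rw [real_inner_comm (b t) (v' j), sq]
  have hnc : ∀ i, ∑ t, c i t ^ 2 = ‖u i‖ ^ 2 := by
    intro i
    rw [← hnorm (u' i)]
    refine Finset.sum_congr rfl fun t _ => ?_
    show (⟪b t, u' i⟫ : ℝ) ^ 2 = ⟪u' i, b t⟫ * ⟪b t, u' i⟫
    rw [real_inner_comm (u' i) (b t), sq]
  calc ∑ i, ∑ j, M i j * ⟪v j, u i⟫
      = ∑ i, ∑ j, ∑ t, M i j * (a j t * c i t) := by
        simp_rw [hinner, Finset.mul_sum]
    _ = ∑ i, ∑ t, ∑ j, M i j * (a j t * c i t) :=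
        Finset.sum_congr rfl fun i _ => Finset.sum_comm
    _ = ∑ t, ∑ i, ∑ j, M i j * (a j t * c i t) := Finset.sum_comm
    _ = ∑ t, ∑ i, (∑ j, M i j * a j t) * c i t := by
        refine Finset.sum_congr rfl fun t _ => Finset.sum_congr rfl fun i _ => ?_
        rw [Finset.sum_mul]
        exact Finset.sum_congr rfl fun j _ => by ring
    _ ≤ ∑ t, σ * (Real.sqrt (∑ j, a j t ^ 2) * Real.sqrt (∑ i, c i t ^ 2)) :=
        Finset.sum_le_sum fun t _ => scalar (fun j => a j t) (fun i => c i t)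
    _ = σ * ∑ t, Real.sqrt (∑ j, a j t ^ 2) * Real.sqrt (∑ i, c i t ^ 2) := by
        rw [Finset.mul_sum]
    _ ≤ σ * (Real.sqrt (∑ t, ∑ j, a j t ^ 2) * Real.sqrt (∑ t, ∑ i, c i t ^ 2)) := by
        refine mul_le_mul_of_nonneg_left ?_ hσ0
        exact Real.sum_sqrt_mul_sqrt_le _
          (fun t => Finset.sum_nonneg fun j _ => sq_nonneg _)
          (fun t => Finset.sum_nonneg fun i _ => sq_nonneg _)
    _ = σ * (Real.sqrt (∑ j, ‖v j‖ ^ 2) * Real.sqrt (∑ i, ‖u i‖ ^ 2)) := by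
        rw [Finset.sum_comm (γ := Fin (Module.finrank ℝ F))]
        rw [show ∑ j, ∑ t, a j t ^ 2 = ∑ j, ‖v j‖ ^ 2 from
          Finset.sum_congr rfl fun j _ => hna j]
        rw [Finset.sum_comm (γ := Fin (Module.finrank ℝ F))]
        rw [show ∑ i, ∑ t, c i t ^ 2 = ∑ i, ‖u i‖ ^ 2 from
          Finset.sum_congr rfl fun i _ => hnc i]

/-- Part (iii) of the quadratic-form lemma (Lemma 2.2): the convolution-type Hölder
inequality for a lower triangular matrix with spectral norm at most `σ`. -/
theorem ierk_quadratic_form_holder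
    {E : Type*} [NormedAddCommGroup E] [InnerProductSpace ℝ E]
    (s : ℕ) (hs : 1 ≤ s) (M : Matrix (Fin s) (Fin s) ℝ)
    (hlow : ∀ i j : Fin s, i < j → M i j = 0)
    (σ : ℝ) (hσpos : 0 < σ)
    (hσ : ∀ x : Fin s → ℝ,
      Real.sqrt (∑ i, (∑ j, M i j * x j) ^ 2) ≤ σ * Real.sqrt (∑ i, (x i) ^ 2))
    (α β : ℝ) (hα : 1 < α) (hβ : 1 < β) (hαβ : 1 / α + 1 / β = 1)
    (v u : Fin s → E) (k : ℕ) (hk1 : 1 ≤ k) (hks : k ≤ s) :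
    ∑ i ∈ Finset.univ.filter (fun i : Fin s => (i : ℕ) < k),
        ∑ j ∈ Finset.Iic i, M i j * ⟪v j, u i⟫ ≤
      (k : ℝ) ^ ((1 : ℝ) / 2 - 1 / max α β) * σ *
        (∑ i ∈ Finset.univ.filter (fun i : Fin s => (i : ℕ) < k), ‖v i‖ ^ α) ^ (1 / α) *
        (∑ i ∈ Finset.univ.filter (fun i : Fin s => (i : ℕ) < k), ‖u i‖ ^ β) ^ (1 / β) := by
  classical
  set T := Finset.univ.filter (fun i : Fin s => (i : ℕ) < k) with hT
  set vt : Fin s → E := fun i => if (i : ℕ) < k then v i else 0 with hvt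
  set ut : Fin s → E := fun i => if (i : ℕ) < k then u i else 0 with hut
  have hα0 : (0 : ℝ) < α := lt_trans one_pos hα
  have hβ0 : (0 : ℝ) < β := lt_trans one_pos hβ
  -- Step A: rewrite the sum
  have stepA : ∑ i ∈ T, ∑ j ∈ Finset.Iic i, M i j * ⟪v j, u i⟫
      = ∑ i, ∑ j, M i j * ⟪vt j, ut i⟫ := by
    have h0 : ∀ i ∈ Finset.univ, i ∉ T → (∑ j, M i j * ⟪vt j, ut i⟫) = 0 := by
      intro i _ hiT
      have hik : ¬ (i : ℕ) < k := by
        intro h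
        exact hiT (by rw [hT, Finset.mem_filter]; exact ⟨Finset.mem_univ _, h⟩)
      refine Finset.sum_eq_zero fun j _ => ?_
      have : ut i = 0 := if_neg hik
      rw [this, inner_zero_right, mul_zero]
    rw [← Finset.sum_subset (Finset.subset_univ T) h0]
    refine Finset.sum_congr rfl fun i hi => ?_
    have hik : (i : ℕ) < k := by
      rw [hT, Finset.mem_filter] at hi
      exact hi.2
    have huti : ut i = u i := if_pos hik
    rw [huti]
    rw [show (∑ j, M i j * ⟪vt j, u i⟫) = ∑ j ∈ Finset.Iic i, M i j * ⟪vt j, u i⟫ by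
      refine (Finset.sum_subset (Finset.subset_univ _) fun j _ hj => ?_).symm
      rw [Finset.mem_Iic, not_le] at hj
      rw [hlow i j hj, zero_mul]]
    refine Finset.sum_congr rfl fun j hj => ?_
    rw [Finset.mem_Iic] at hj
    have hjk : (j : ℕ) < k := lt_of_le_of_lt (Fin.le_iff_val_le_val.mp hj) hik
    have : vt j = v j := if_pos hjk
    rw [this]
  -- Step B: the bilinear bound
  have stepB := aux_bilinear M hσpos.le hσ vt ut
  -- Step C: rewrite truncated sums
  have stepCv : ∑ j, ‖vt j‖ ^ 2 = ∑ i ∈ T, ‖v i‖ ^ 2 := by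
    rw [hT, Finset.sum_filter]
    refine Finset.sum_congr rfl fun i _ => ?_
    rw [hvt]
    by_cases h : (i : ℕ) < k <;> simp [h]
  have stepCu : ∑ i, ‖ut i‖ ^ 2 = ∑ i ∈ T, ‖u i‖ ^ 2 := by
    rw [hT, Finset.sum_filter]
    refine Finset.sum_congr rfl fun i _ => ?_
    rw [hut]
    by_cases h : (i : ℕ) < k <;> simp [h]
  -- Step D: the cardinality of T
  have hcard : T.card = k := by
    rw [hT]
    have hset : Finset.univ.filter (fun i : Fin s => (i : ℕ) < k)
        = Finset.map (Fin.castLEEmb hks) Finset.univ := by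
      ext i
      rw [Finset.mem_filter, Finset.mem_map]
      constructor
      · intro h
        exact ⟨⟨(i : ℕ), h.2⟩, Finset.mem_univ _, Fin.ext rfl⟩
      · rintro ⟨j, -, rfl⟩
        exact ⟨Finset.mem_univ _, by simpa using j.2⟩
    rw [hset, Finset.card_map, Finset.card_univ, Fintype.card_fin]
  -- nonnegativity facts
  have hVα0 : (0 : ℝ) ≤ (∑ i ∈ T, ‖v i‖ ^ α) ^ (1 / α) :=
    Real.rpow_nonneg (Finset.sum_nonneg fun i _ => Real.rpow_nonneg (norm_nonneg _) _) _
  have hUβ0 : (0 : ℝ) ≤ (∑ i ∈ T, ‖u i‖ ^ β) ^ (1 / β) :=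
    Real.rpow_nonneg (Finset.sum_nonneg fun i _ => Real.rpow_nonneg (norm_nonneg _) _) _
  rcases le_total α 2 with hα2 | hα2
  · -- α ≤ 2 ≤ β, max = β
    have hβ2 : (2 : ℝ) ≤ β := by
      have h1 : (1 : ℝ) / 2 ≤ 1 / α := by
        apply one_div_le_one_div_of_le hα0 hα2
      have h2 : 1 / β ≤ (1 : ℝ) / 2 := by linarith
      exact (one_div_le_one_div hβ0 (by norm_num)).mp h2
    have hmax : max α β = β := max_eq_right (le_trans hα2 hβ2)
    have b1 : Real.sqrt (∑ i ∈ T, ‖v i‖ ^ 2) ≤ (∑ i ∈ T, ‖v i‖ ^ α) ^ (1 / α) :=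
      aux_l2_le_lp T (fun i => ‖v i‖) (fun i => norm_nonneg _) hα0 hα2
    have b2 : Real.sqrt (∑ i ∈ T, ‖u i‖ ^ 2) ≤
        (T.card : ℝ) ^ ((1 : ℝ) / 2 - 1 / β) * (∑ i ∈ T, ‖u i‖ ^ β) ^ (1 / β) :=
      aux_l2_le_card_lp T (fun i => ‖u i‖) (fun i => norm_nonneg _) hβ2
    rw [hmax]
    calc ∑ i ∈ T, ∑ j ∈ Finset.Iic i, M i j * ⟪v j, u i⟫
        = ∑ i, ∑ j, M i j * ⟪vt j, ut i⟫ := stepA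
      _ ≤ σ * (Real.sqrt (∑ j, ‖vt j‖ ^ 2) * Real.sqrt (∑ i, ‖ut i‖ ^ 2)) := stepB
      _ = σ * (Real.sqrt (∑ i ∈ T, ‖v i‖ ^ 2) * Real.sqrt (∑ i ∈ T, ‖u i‖ ^ 2)) := by
          rw [stepCv, stepCu]
      _ ≤ σ * ((∑ i ∈ T, ‖v i‖ ^ α) ^ (1 / α) *
            ((T.card : ℝ) ^ ((1 : ℝ) / 2 - 1 / β) * (∑ i ∈ T, ‖u i‖ ^ β) ^ (1 / β))) := by
          refine mul_le_mul_of_nonneg_left ?_ hσpos.le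
          exact mul_le_mul b1 b2 (Real.sqrt_nonneg _) hVα0
      _ = (k : ℝ) ^ ((1 : ℝ) / 2 - 1 / β) * σ *
            (∑ i ∈ T, ‖v i‖ ^ α) ^ (1 / α) * (∑ i ∈ T, ‖u i‖ ^ β) ^ (1 / β) := by
          rw [hcard]; ring
  · -- β ≤ 2 ≤ α, max = α
    have hβ2 : β ≤ (2 : ℝ) := by
      have h1 : 1 / α ≤ (1 : ℝ) / 2 := by
        apply one_div_le_one_div_of_le (by norm_num) hα2
      have h2 : (1 : ℝ) / 2 ≤ 1 / β := by linarith
      exact (one_div_le_one_div (by norm_num) hβ0).mp h2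
    have hmax : max α β = α := max_eq_left (le_trans hβ2 hα2)
    have b1 : Real.sqrt (∑ i ∈ T, ‖v i‖ ^ 2) ≤
        (T.card : ℝ) ^ ((1 : ℝ) / 2 - 1 / α) * (∑ i ∈ T, ‖v i‖ ^ α) ^ (1 / α) :=
      aux_l2_le_card_lp T (fun i => ‖v i‖) (fun i => norm_nonneg _) hα2
    have b2 : Real.sqrt (∑ i ∈ T, ‖u i‖ ^ 2) ≤ (∑ i ∈ T, ‖u i‖ ^ β) ^ (1 / β) :=
      aux_l2_le_lp T (fun i => ‖u i‖) (fun i => norm_nonneg _) hβ0 hβ2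
    rw [hmax]
    calc ∑ i ∈ T, ∑ j ∈ Finset.Iic i, M i j * ⟪v j, u i⟫
        = ∑ i, ∑ j, M i j * ⟪vt j, ut i⟫ := stepA
      _ ≤ σ * (Real.sqrt (∑ j, ‖vt j‖ ^ 2) * Real.sqrt (∑ i, ‖ut i‖ ^ 2)) := stepB
      _ = σ * (Real.sqrt (∑ i ∈ T, ‖v i‖ ^ 2) * Real.sqrt (∑ i ∈ T, ‖u i‖ ^ 2)) := by
          rw [stepCv, stepCu]
      _ ≤ σ * (((T.card : ℝ) ^ ((1 : ℝ) / 2 - 1 / α) * (∑ i ∈ T, ‖v i‖ ^ α) ^ (1 / α)) *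
            (∑ i ∈ T, ‖u i‖ ^ β) ^ (1 / β)) := by
          refine mul_le_mul_of_nonneg_left ?_ hσpos.le
          refine mul_le_mul b1 b2 (Real.sqrt_nonneg _) ?_
          positivity
      _ = (k : ℝ) ^ ((1 : ℝ) / 2 - 1 / α) * σ *
            (∑ i ∈ T, ‖v i‖ ^ α) ^ (1 / α) * (∑ i ∈ T, ‖u i‖ ^ β) ^ (1 / β) := by
          rw [hcard]; ring
end

section
/- Let s > 1 and N ≥ 1 be integers, let 0 = t₀ < t₁ < ⋯ < t_N be time levels with steps τ_n = t_n − t_{n−1}, and let v_{n,i} ≥ 0 be a nonnegative discrete function defined for 1 ≤ n ≤ N and 1 ≤ i ≤ s satisfying the compatibility v_{n,s} = v_{n+1,1} for 1 ≤ n < N; write v₀ := v_{1,1}. Suppose there exist constants ξ > 0 and c_g > 0 such that (1 + 2 ξ τ_n) v_{n,i} ≤ v_{n,1} + c_g τ_n for every 1 ≤ n ≤ N and every 2 ≤ i ≤ s, and suppose the maximum step size satisfies max_n τ_n ≤ 1/ξ. Then v_{m,i} ≤ e^{−ξ t_m} v₀ + c_g/ξ for every 1 ≤ m ≤ N and every 2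 ≤ i ≤ s. -/
private lemma exp_le_one_add_two_mul {x : ℝ} (h0 : 0 ≤ x) (h1 : x ≤ 1) :
    Real.exp x ≤ 1 + 2 * x := by
  have hc := convexOn_exp.2 (Set.mem_univ (0:ℝ)) (Set.mem_univ (1:ℝ))
    (by linarith : (0:ℝ) ≤ 1 - x) h0 (by ring)
  simp only [smul_eq_mul, mul_zero, mul_one, zero_add, Real.exp_zero] at hc
  have he : Real.exp 1 < 2.7182818286 := Real.exp_one_lt_d9
  nlinarith

private lemma core (ξ cg τ E vi v1 v0 : ℝ) (hξ : 0 < ξ) (hcg : 0 < cg) (hτ : 0 < τ)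
    (hτ1 : ξ * τ ≤ 1) (hv0 : 0 ≤ v0) (hE : 0 < E)
    (hstep : (1 + 2 * ξ * τ) * vi ≤ v1 + cg * τ)
    (hv1 : v1 ≤ E * v0 + cg / ξ) :
    vi ≤ Real.exp (-(ξ * τ)) * E * v0 + cg / ξ := by
  set D := Real.exp (-(ξ * τ)) with hDdef
  have hDpos : 0 < D := Real.exp_pos _
  have hxτ : 0 ≤ ξ * τ := by positivity
  have hbound : Real.exp (ξ * τ) ≤ 1 + 2 * (ξ * τ) := exp_le_one_add_two_mul hxτ hτ1
  have hD1 : 1 ≤ D * (1 + 2 * ξ * τ) := by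
    have : D * Real.exp (ξ * τ) = 1 := by
      rw [hDdef, ← Real.exp_add]; simp
    nlinarith [mul_le_mul_of_nonneg_left hbound hDpos.le]
  have hcgτ : cg / ξ * (ξ * τ) = cg * τ := by field_simp
  have hpos : (0:ℝ) < 1 + 2 * ξ * τ := by nlinarith
  -- (1+2ξτ) vi ≤ E v0 + cg/ξ + cg τ ≤ (1+2ξτ)(D E v0 + cg/ξ)
  have h1 : (1 + 2 * ξ * τ) * vi ≤ (1 + 2 * ξ * τ) * (D * E * v0 + cg / ξ) := by
    have hcgξ : 0 < cg / ξ := by positivity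
    nlinarith [mul_le_mul_of_nonneg_right hD1 (mul_nonneg hE.le hv0)]
  exact le_of_mul_le_mul_left (by linarith [h1]) hpos

/-- Damping-type discrete Grönwall inequality for multi-stage Runge–Kutta methods
(Lemma 2.3 of the paper). -/
theorem damping_discrete_gronwall_multistage
    (s N : ℕ) (hs : 1 < s) (hN : 1 ≤ N)
    (t : ℕ → ℝ) (ht0 : t 0 = 0) (htmono : ∀ n, n < N → t n < t (n + 1))
    (v : ℕ → ℕ → ℝ)
    (hvnonneg : ∀ n i, 1 ≤ n → n ≤ N → 1 ≤ i → i ≤ s → 0 ≤ v n i)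
    (hcompat : ∀ n, 1 ≤ n → n < N → v n s = v (n + 1) 1)
    (ξ cg : ℝ) (hξ : 0 < ξ) (hcg : 0 < cg)
    (hstep : ∀ n i, 1 ≤ n → n ≤ N → 2 ≤ i → i ≤ s →
      (1 + 2 * ξ * (t n - t (n - 1))) * v n i ≤ v n 1 + cg * (t n - t (n - 1)))
    (hmax : ∀ n, 1 ≤ n → n ≤ N → t n - t (n - 1) ≤ 1 / ξ) :
    ∀ m i, 1 ≤ m → m ≤ N → 2 ≤ i → i ≤ s →
      v m i ≤ Real.exp (-ξ * t m) * v 1 1 + cg / ξ := by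
  have hv0 : 0 ≤ v 1 1 := hvnonneg 1 1 le_rfl hN le_rfl (le_of_lt hs)
  -- basic step facts
  have hτfacts : ∀ m, 1 ≤ m → m ≤ N →
      0 < t m - t (m - 1) ∧ ξ * (t m - t (m - 1)) ≤ 1 := by
    intro m hm1 hmN
    have hm : m - 1 + 1 = m := Nat.succ_pred_eq_of_pos hm1
    have hlt : m - 1 < N := by omega
    have := htmono (m - 1) hlt
    rw [hm] at this
    refine ⟨by linarith, ?_⟩
    have h := hmax m hm1 hmN
    have := mul_le_mul_of_nonneg_left h hξ.le
    rwa [mul_one_div, div_self hξ.ne'] at this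
  -- main inductive claim on the first stage
  have P : ∀ m, 1 ≤ m → m ≤ N →
      v m 1 ≤ Real.exp (-ξ * t (m - 1)) * v 1 1 + cg / ξ := by
    intro m hm1
    induction m, hm1 using Nat.le_induction with
    | base =>
      intro _
      simp only [Nat.sub_self, ht0, mul_zero, Real.exp_zero, one_mul]
      have : 0 < cg / ξ := by positivity
      linarith
    | succ m hm ih =>
      intro hmN
      have hmN' : m ≤ N := by omega
      have hmlt : m < N := by omega
      have hv1 := ih hmN'
      obtain ⟨hτpos, hτ1⟩ := hτfacts m hm hmN'
      have hbound := core ξ cg (t m - t (m - 1)) (Real.exp (-ξ * t (m - 1)))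
        (v m s) (v m 1) (v 1 1) hξ hcg hτpos hτ1 hv0 (Real.exp_pos _)
        (hstep m s hm hmN' hs (le_refl s)) hv1
      rw [← hcompat m hm hmlt]
      simp only [Nat.add_sub_cancel]
      calc v m s ≤ _ := hbound
        _ = Real.exp (-ξ * t m) * v 1 1 + cg / ξ := by
            rw [← Real.exp_add]; ring_nf
  intro m i hm1 hmN h2i his
  obtain ⟨hτpos, hτ1⟩ := hτfacts m hm1 hmN
  have hbound := core ξ cg (t m - t (m - 1)) (Real.exp (-ξ * t (m - 1)))
    (v m i) (v m 1) (v 1 1) hξ hcg hτpos hτ1 hv0 (Real.exp_pos _)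
    (hstep m i hm1 hmN h2i his) (P m hm1 hmN)
  calc v m i ≤ _ := hbound
    _ = Real.exp (-ξ * t m) * v 1 1 + cg / ξ := by
        rw [← Real.exp_add]; ring_nf
end

section
/- Let 0 < δ ≤ 1/2, let k ≥ 1 be an integer, and let a₁, …, a_k be nonnegative real numbers. Then Σ_{i=1}^{k} (Σ_{ℓ=1}^{i} a_ℓ^{δ})⁴ ≤ (1 − 2δ) k⁵ + 2 δ k⁴ Σ_{ℓ=1}^{k} a_ℓ². -/
/-- The chained power-mean inequality from the proof of the H¹ nonlinear convection
bound (Lemma 3.2 in the supplementary material):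
`∑_{i=1}^{k} (∑_{ℓ=1}^{i} a_ℓ^δ)⁴ ≤ (1 − 2δ) k⁵ + 2δ k⁴ ∑_{ℓ=1}^{k} a_ℓ²`
for `0 < δ ≤ 1/2` and nonnegative `a_ℓ`. -/
theorem chained_power_mean_inequality
    (δ : ℝ) (hδ0 : 0 < δ) (hδ : δ ≤ 1 / 2) (k : ℕ) (hk : 1 ≤ k)
    (a : ℕ → ℝ) (ha : ∀ i, 0 ≤ a i) :
    ∑ i ∈ Finset.range k, (∑ l ∈ Finset.range (i + 1), a l ^ δ) ^ 4 ≤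
      (1 - 2 * δ) * (k : ℝ) ^ 5 + 2 * δ * (k : ℝ) ^ 4 * ∑ l ∈ Finset.range k, a l ^ 2 := by
  have hsum2 : 0 ≤ ∑ l ∈ Finset.range k, a l ^ 2 := by positivity
  have key : ∀ i ∈ Finset.range k,
      (∑ l ∈ Finset.range (i + 1), a l ^ δ) ^ 4 ≤
        (1 - 2 * δ) * (k : ℝ) ^ 4 + 2 * δ * (k : ℝ) ^ 3 * ∑ l ∈ Finset.range k, a l ^ 2 := by
    intro i hi
    rw [Finset.mem_range] at hi
    have hik : ((i : ℝ) + 1) ≤ (k : ℝ) := by exact_mod_cast Nat.succ_le_of_lt hi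
    have hn : (0:ℝ) ≤ (i : ℝ) + 1 := by positivity
    set s := Finset.range (i + 1)
    have c1 : (∑ l ∈ s, a l ^ δ) ^ 2 ≤ ((i:ℝ)+1) * ∑ l ∈ s, (a l ^ δ) ^ 2 := by
      have := sq_sum_le_card_mul_sum_sq (s := s) (f := fun l => a l ^ δ)
      simpa [s, Finset.card_range] using this
    have c2 : (∑ l ∈ s, (a l ^ δ) ^ 2) ^ 2 ≤ ((i:ℝ)+1) * ∑ l ∈ s, ((a l ^ δ) ^ 2) ^ 2 := by
      have := sq_sum_le_card_mul_sum_sq (s := s) (f := fun l => (a l ^ δ) ^ 2)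
      simpa [s, Finset.card_range] using this
    have young : ∀ l, ((a l ^ δ) ^ 2) ^ 2 ≤ (1 - 2 * δ) + 2 * δ * (a l ^ 2) := by
      intro l
      have h1 : ((a l ^ δ) ^ 2) ^ 2 = (a l ^ 2) ^ (2 * δ) := by
        rw [← pow_mul, ← Real.rpow_natCast (a l ^ δ) (2*2), ← Real.rpow_mul (ha l),
          ← Real.rpow_natCast (a l) 2, ← Real.rpow_mul (ha l)]
        push_cast
        ring_nf
      rw [h1]
      have := Real.geom_mean_le_arith_mean2_weighted (w₁ := 1 - 2*δ) (w₂ := 2*δ)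
        (p₁ := 1) (p₂ := a l ^ 2) (by linarith) (by linarith) zero_le_one (by positivity)
        (by ring)
      simpa using this
    have c3 : ∑ l ∈ s, ((a l ^ δ) ^ 2) ^ 2 ≤ ((i:ℝ)+1) * (1 - 2*δ) + 2*δ * ∑ l ∈ s, a l ^ 2 := by
      calc ∑ l ∈ s, ((a l ^ δ) ^ 2) ^ 2 ≤ ∑ l ∈ s, ((1 - 2*δ) + 2*δ * (a l ^ 2)) :=
            Finset.sum_le_sum fun l _ => young l
        _ = ((i:ℝ)+1) * (1 - 2*δ) + 2*δ * ∑ l ∈ s, a l ^ 2 := by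
            rw [Finset.sum_add_distrib, Finset.sum_const, ← Finset.mul_sum]
            simp [s, Finset.card_range, mul_comm]
    have hsub : ∑ l ∈ s, a l ^ 2 ≤ ∑ l ∈ Finset.range k, a l ^ 2 :=
      Finset.sum_le_sum_of_subset_of_nonneg
        (Finset.range_subset_range.2 (Nat.succ_le_of_lt hi)) (fun l _ _ => sq_nonneg _)
    have h2 : (∑ l ∈ s, a l ^ δ) ^ 4 ≤ ((i:ℝ)+1) ^ 2 * (∑ l ∈ s, (a l ^ δ) ^ 2) ^ 2 := by
      have : (∑ l ∈ s, a l ^ δ) ^ 4 = ((∑ l ∈ s, a l ^ δ) ^ 2) ^ 2 := by ring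
      rw [this, ← mul_pow]
      exact pow_le_pow_left₀ (by positivity) c1 2
    have hssum : 0 ≤ ∑ l ∈ s, a l ^ 2 := by positivity
    calc (∑ l ∈ s, a l ^ δ) ^ 4
        ≤ ((i:ℝ)+1) ^ 2 * (((i:ℝ)+1) * ∑ l ∈ s, ((a l ^ δ) ^ 2) ^ 2) := by
          refine h2.trans (mul_le_mul_of_nonneg_left c2 (by positivity))
      _ = ((i:ℝ)+1) ^ 3 * ∑ l ∈ s, ((a l ^ δ) ^ 2) ^ 2 := by ring
      _ ≤ ((i:ℝ)+1) ^ 3 * (((i:ℝ)+1) * (1 - 2*δ) + 2*δ * ∑ l ∈ Finset.range k, a l ^ 2) := by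
          refine mul_le_mul_of_nonneg_left (c3.trans ?_) (by positivity)
          have := mul_le_mul_of_nonneg_left hsub (by linarith : (0:ℝ) ≤ 2*δ)
          linarith
      _ ≤ (k:ℝ) ^ 3 * ((k:ℝ) * (1 - 2*δ) + 2*δ * ∑ l ∈ Finset.range k, a l ^ 2) := by
          refine mul_le_mul (pow_le_pow_left₀ hn hik 3) ?_ ?_ (by positivity)
          · refine add_le_add (mul_le_mul_of_nonneg_right hik (by linarith)) le_rfl
          · have : (0:ℝ) ≤ ((i:ℝ)+1) * (1 - 2*δ) := by
              apply mul_nonneg hn; linarith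
            positivity
      _ = (1 - 2 * δ) * (k : ℝ) ^ 4 + 2 * δ * (k : ℝ) ^ 3 * ∑ l ∈ Finset.range k, a l ^ 2 := by
          ring
  calc ∑ i ∈ Finset.range k, (∑ l ∈ Finset.range (i + 1), a l ^ δ) ^ 4
      ≤ ∑ i ∈ Finset.range k, ((1 - 2 * δ) * (k : ℝ) ^ 4 + 2 * δ * (k : ℝ) ^ 3 * ∑ l ∈ Finset.range k, a l ^ 2) :=
        Finset.sum_le_sum key
    _ = (1 - 2 * δ) * (k : ℝ) ^ 5 + 2 * δ * (k : ℝ) ^ 4 * ∑ l ∈ Finset.range k, a l ^ 2 := by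
        rw [Finset.sum_const, Finset.card_range, nsmul_eq_mul]; ring
end

section
/- Let c₂ be a real number with either 3/25 ≤ c₂ ≤ 43/100 or 29/25 ≤ c₂ ≤ 429/100. Then the symmetric part of the 2×2 real matrix M(c₂) = [[c₂, 0], [(2c₂² − 2c₂ + 1)/(2 − 2c₂), (1 − 2c₂)/(2 − 2c₂)]] is positive definite, i.e. xᵀ (M(c₂) + M(c₂)ᵀ)/2 x > 0 for all nonzero x ∈ ℝ². -/
open Matrix

/-- For `c₂` in the stated intervals, the symmetric part of the difference
coefficient matrix `E₂⁻¹ A_I` of the IERK(2,3;c₂) method is positive definite. -/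
theorem IERK23_symmetric_part_posDef (c₂ : ℝ)
    (h : (3 / 25 ≤ c₂ ∧ c₂ ≤ 43 / 100) ∨ (29 / 25 ≤ c₂ ∧ c₂ ≤ 429 / 100)) :
    let M : Matrix (Fin 2) (Fin 2) ℝ :=
      !![c₂, 0;
         (2 * c₂ ^ 2 - 2 * c₂ + 1) / (2 - 2 * c₂), (1 - 2 * c₂) / (2 - 2 * c₂)]
    ∀ x : Fin 2 → ℝ, x ≠ 0 → 0 < x ⬝ᵥ (((1 : ℝ) / 2) • (M + Mᵀ)).mulVec x := by
  intro M x hx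
  have ha : 0 < c₂ := by rcases h with ⟨h1, _⟩ | ⟨h1, _⟩ <;> linarith
  have ht : (2 - 2 * c₂) ≠ 0 := by
    rcases h with ⟨_, h2⟩ | ⟨h1, _⟩ <;> intro hc <;> linarith
  have hP : 0 < -4 * c₂ ^ 4 + 24 * c₂ ^ 3 - 32 * c₂ ^ 2 + 12 * c₂ - 1 := by
    rcases h with ⟨h1, h2⟩ | ⟨h1, h2⟩ <;>
      nlinarith [sq_nonneg (c₂ - 3/25), sq_nonneg (c₂ - 43/100), sq_nonneg (c₂ - 29/25),
        sq_nonneg (c₂ - 429/100), sq_nonneg c₂, mul_nonneg (sub_nonneg.2 h1) (sub_nonneg.2 h2),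
        mul_nonneg (mul_nonneg (sub_nonneg.2 h1) (sub_nonneg.2 h2)) (sub_nonneg.2 h1),
        mul_nonneg (mul_nonneg (sub_nonneg.2 h1) (sub_nonneg.2 h2)) (sub_nonneg.2 h2)]
  have hQ : x ⬝ᵥ (((1 : ℝ) / 2) • (M + Mᵀ)).mulVec x
      = c₂ * x 0 ^ 2 + ((2 * c₂ ^ 2 - 2 * c₂ + 1) / (2 - 2 * c₂)) * (x 0 * x 1)
        + ((1 - 2 * c₂) / (2 - 2 * c₂)) * x 1 ^ 2 := by
    simp [M, Matrix.mulVec, dotProduct, Fin.sum_univ_two, Matrix.transpose_apply,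
      Matrix.add_apply, Matrix.smul_apply, Matrix.cons_val_zero, Matrix.cons_val_one,
      Matrix.head_cons, Matrix.vecHead, Matrix.vecTail, Function.comp]
    ring
  rw [hQ]
  have hx01 : x 0 ≠ 0 ∨ x 1 ≠ 0 := by
    by_contra hc
    push_neg at hc
    apply hx
    funext i
    fin_cases i <;> simp [hc.1, hc.2]
  have ht2 : 0 < (2 - 2 * c₂) ^ 2 := by positivity
  have key : 0 < (c₂ * x 0 ^ 2 + ((2 * c₂ ^ 2 - 2 * c₂ + 1) / (2 - 2 * c₂)) * (x 0 * x 1)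
        + ((1 - 2 * c₂) / (2 - 2 * c₂)) * x 1 ^ 2) * (4 * c₂ * (2 - 2 * c₂) ^ 2) := by
    have heq : (c₂ * x 0 ^ 2 + ((2 * c₂ ^ 2 - 2 * c₂ + 1) / (2 - 2 * c₂)) * (x 0 * x 1)
        + ((1 - 2 * c₂) / (2 - 2 * c₂)) * x 1 ^ 2) * (4 * c₂ * (2 - 2 * c₂) ^ 2)
        = (2 * c₂ * (2 - 2 * c₂) * x 0 + (2 * c₂ ^ 2 - 2 * c₂ + 1) * x 1) ^ 2
          + (-4 * c₂ ^ 4 + 24 * c₂ ^ 3 - 32 * c₂ ^ 2 + 12 * c₂ - 1) * x 1 ^ 2 := by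
      have ht' : (1 - c₂) ≠ 0 := by intro hc; apply ht; linarith
      field_simp
      ring
    rw [heq]
    rcases hx01 with h0 | h1
    · rcases eq_or_ne (x 1) 0 with h1 | h1
      · have hne : (2 * c₂ * (2 - 2 * c₂) * x 0 + (2 * c₂ ^ 2 - 2 * c₂ + 1) * x 1) ≠ 0 := by
          rw [h1, mul_zero, add_zero]
          exact mul_ne_zero (mul_ne_zero (by positivity) ht) h0
        have hsq : 0 < (2 * c₂ * (2 - 2 * c₂) * x 0 + (2 * c₂ ^ 2 - 2 * c₂ + 1) * x 1) ^ 2 :=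
          pow_pos (abs_pos.mpr hne) 2 |>.trans_le (by rw [sq_abs])
        nlinarith [hsq]
      · positivity
    · positivity
  have h4 : 0 < 4 * c₂ * (2 - 2 * c₂) ^ 2 := by positivity
  have := div_pos key h4
  rwa [mul_div_assoc, div_self h4.ne', mul_one] at this
end

section
/- Let a₅₅ be a real number with 63/100 ≤ a₅₅ ≤ 21/10. Let A_I be the 4×4 lower triangular matrix with rows (1, 0, 0, 0), (−3/10, 4/5, 0, 0), (−367/250, 196/125, 4/5, 0), (−2(36a₅₅ − 5)/147, (75a₅₅ + 598)/588, −25(15a₅₅ + 2)/588, a₅₅), and let E₄ be the 4×4 lower triangular matrix all of whose entries on and below the diagonal equal 1. Then the symmetric part (M + Mᵀ)/2 of M := E₄⁻¹A_I is positive definite. -/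
open Matrix

/-- For `63/100 ≤ a₅₅ ≤ 21/10`, the symmetric part of the difference coefficient
matrix `E₄⁻¹ A_I` of the IERK(3,5;a₅₅) method is positive definite. -/
theorem IERK35_symmetric_part_posDef (a : ℝ) (ha1 : 63 / 100 ≤ a) (ha2 : a ≤ 21 / 10) :
    let AI : Matrix (Fin 4) (Fin 4) ℝ :=
      !![1, 0, 0, 0;
         -3 / 10, 4 / 5, 0, 0;
         -367 / 250, 196 / 125, 4 / 5, 0;
         -2 * (36 * a - 5) / 147, (75 * a + 598) / 588, -25 * (15 * a + 2) / 588, a]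
    let E : Matrix (Fin 4) (Fin 4) ℝ := fun i j => if j ≤ i then 1 else 0
    let M : Matrix (Fin 4) (Fin 4) ℝ := E⁻¹ * AI
    ∀ x : Fin 4 → ℝ, x ≠ 0 → 0 < x ⬝ᵥ (((1 : ℝ) / 2) • (M + Mᵀ)).mulVec x := by
  intro AI E M x hx
  have hEmat : E = !![1, 0, 0, 0; 1, 1, 0, 0; 1, 1, 1, 0; 1, 1, 1, 1] := by
    ext i j
    fin_cases i <;> fin_cases j <;> simp [E, Matrix.vecHead, Matrix.vecTail]
  have hE : E⁻¹ = !![1, 0, 0, 0; -1, 1, 0, 0; 0, -1, 1, 0; 0, 0, -1, 1] := by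
    rw [hEmat]
    apply Matrix.inv_eq_left_inv
    ext i j
    fin_cases i <;> fin_cases j <;>
      simp [Matrix.mul_apply, Fin.sum_univ_four, Matrix.vecHead, Matrix.vecTail]
  have hM : M = !![1, 0, 0, 0;
      -13/10, 4/5, 0, 0;
      -146/125, 96/125, 4/5, 0;
      56449/36750 - 24/49 * a, -20249/36750 + 25/196 * a, -1301/1470 - 125/196 * a, a] := by
    show E⁻¹ * AI = _
    rw [hE]
    ext i j
    fin_cases i <;> fin_cases j <;>
      simp [Matrix.mul_apply, Fin.sum_univ_four, AI] <;> ring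
  -- some component of x is nonzero
  have hsum : 0 < x 0 ^ 2 + x 1 ^ 2 + x 2 ^ 2 + x 3 ^ 2 := by
    have hcases : x 0 ≠ 0 ∨ x 1 ≠ 0 ∨ x 2 ≠ 0 ∨ x 3 ≠ 0 := by
      by_contra h
      push_neg at h
      apply hx
      ext i
      fin_cases i <;> simp [h.1, h.2.1, h.2.2.1, h.2.2.2]
    rcases hcases with h | h | h | h <;>
      nlinarith [pow_two_pos_of_ne_zero h, sq_nonneg (x 0), sq_nonneg (x 1),
        sq_nonneg (x 2), sq_nonneg (x 3)]
  rw [hM]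
  simp only [dotProduct, Matrix.mulVec, Matrix.smul_apply, Matrix.add_apply,
    Matrix.transpose_apply, Fin.sum_univ_four, smul_eq_mul, Matrix.cons_val', Matrix.cons_val_zero,
    Matrix.cons_val_one, Matrix.head_cons, Matrix.empty_val', Matrix.cons_val_fin_one,
    Matrix.head_fin_const, Matrix.cons_val_two, Matrix.tail_cons, Matrix.cons_val_three,
    Matrix.cons_val_fin_one, Matrix.head_fin_const, Matrix.of_apply, Matrix.cons_val_four]
  nlinarith [sq_nonneg (293853 * x 0 - 191100 * x 1 - 171696 * x 2 + (225796 - 72000 * a) * x 3),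
    sq_nonneg (221440947 * x 1 + 2474304 * x 2 + (131623796 - 56118750 * a) * x 3),
    sq_nonneg (22548905701 * x 2 + (183295916 - 22680599750 * a) * x 3),
    mul_nonneg (sub_nonneg.mpr ha1) (sq_nonneg (x 3)),
    mul_nonneg (mul_nonneg (sub_nonneg.mpr ha1) (sub_nonneg.mpr ha2)) (sq_nonneg (x 3)),
    hsum]
end

section
/- Let A_I be the 6×6 lower triangular real matrix with rows: row 1: (3/4, 0, 0, 0, 0, 0); row 2: (−1/2, 3/2, 0, 0, 0, 0); row 3: (−169/800, 129/800, 1/2, 0, 0, 0); row 4: (−11099846794473413537/13545655559296875000, 5938991227245191/56762747105625000, 4021588899578801/4257206032921875, 144648284471/278085937500, 0, 0); row 5: (−15012700453574148059759/355573458431542968750000, 37751222339857820917/135456555592968750000, 2547104330002710487/10159241669472656250, −3921377950657453/7299755859375000, 4/5, 0); row 6: (94181/262500, −53/100, 3/5, −125681/262500, 4/5, 1/4). Let E₆ be the 6×6 lower triangular matrix all of whose entries on and below the diagonal equal 1. Then the symmetric part (M + Mᵀ)/2 of M := E₆⁻¹A_I is positive definite. -/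
open Matrix

@[simp] lemma cons_val_five {α : Type*} {m : ℕ} (x : α) (u : Fin (m + 5) → α) :
    Matrix.vecCons x u 5 =
      Matrix.vecHead (Matrix.vecTail (Matrix.vecTail (Matrix.vecTail (Matrix.vecTail u)))) :=
  rfl

lemma sos_pos (d0 d1 d2 d3 d4 d5 s0 s1 s2 s3 s4 s5 : ℝ)
    (h0 : 0 < d0) (h1 : 0 < d1) (h2 : 0 < d2) (h3 : 0 < d3) (h4 : 0 < d4) (h5 : 0 < d5)
    (hs : s0 ≠ 0 ∨ s1 ≠ 0 ∨ s2 ≠ 0 ∨ s3 ≠ 0 ∨ s4 ≠ 0 ∨ s5 ≠ 0) :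
    0 < d0 * s0^2 + d1 * s1^2 + d2 * s2^2 + d3 * s3^2 + d4 * s4^2 + d5 * s5^2 := by
  have n0 := mul_nonneg h0.le (sq_nonneg s0)
  have n1 := mul_nonneg h1.le (sq_nonneg s1)
  have n2 := mul_nonneg h2.le (sq_nonneg s2)
  have n3 := mul_nonneg h3.le (sq_nonneg s3)
  have n4 := mul_nonneg h4.le (sq_nonneg s4)
  have n5 := mul_nonneg h5.le (sq_nonneg s5)
  rcases hs with h | h | h | h | h | h
  · nlinarith [mul_pos h0 (pow_pos (abs_pos.mpr h) 2), sq_abs s0]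
  · nlinarith [mul_pos h1 (pow_pos (abs_pos.mpr h) 2), sq_abs s1]
  · nlinarith [mul_pos h2 (pow_pos (abs_pos.mpr h) 2), sq_abs s2]
  · nlinarith [mul_pos h3 (pow_pos (abs_pos.mpr h) 2), sq_abs s3]
  · nlinarith [mul_pos h4 (pow_pos (abs_pos.mpr h) 2), sq_abs s4]
  · nlinarith [mul_pos h5 (pow_pos (abs_pos.mpr h) 2), sq_abs s5]

set_option maxHeartbeats 4000000 in
/-- The symmetric part of the difference coefficient matrix `E₆⁻¹ A_I` of the
fourth-order IERK(4,7;â₄₃) method is positive definite. -/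
theorem IERK47_symmetric_part_posDef :
    let AI : Matrix (Fin 6) (Fin 6) ℝ :=
      !![3 / 4, 0, 0, 0, 0, 0;
         -1 / 2, 3 / 2, 0, 0, 0, 0;
         -169 / 800, 129 / 800, 1 / 2, 0, 0, 0;
         -11099846794473413537 / 13545655559296875000, 5938991227245191 / 56762747105625000,
           4021588899578801 / 4257206032921875, 144648284471 / 278085937500, 0, 0;
         -15012700453574148059759 / 355573458431542968750000,
           37751222339857820917 / 135456555592968750000,
           2547104330002710487 / 10159241669472656250,
           -3921377950657453 / 7299755859375000, 4 / 5, 0;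
         94181 / 262500, -53 / 100, 3 / 5, -125681 / 262500, 4 / 5, 1 / 4]
    let E : Matrix (Fin 6) (Fin 6) ℝ := fun i j => if j ≤ i then 1 else 0
    let M : Matrix (Fin 6) (Fin 6) ℝ := E⁻¹ * AI
    ∀ x : Fin 6 → ℝ, x ≠ 0 → 0 < x ⬝ᵥ (((1 : ℝ) / 2) • (M + Mᵀ)).mulVec x := by
  intro AI E M x hx
  have hE : E⁻¹ = !![1, 0, 0, 0, 0, 0; -1, 1, 0, 0, 0, 0; 0, -1, 1, 0, 0, 0;
      0, 0, -1, 1, 0, 0; 0, 0, 0, -1, 1, 0; 0, 0, 0, 0, -1, 1] := by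
    apply Matrix.inv_eq_left_inv
    ext i j
    fin_cases i <;> fin_cases j <;>
      · rw [Matrix.mul_apply]; simp [E, Fin.sum_univ_six, Matrix.one_apply]
  have hM : M = !![(3 / 4), 0, 0, 0, 0, 0;
     ((-5) / 4), (3 / 2), 0, 0, 0, 0;
     (231 / 800), ((-1071) / 800), (1 / 2), 0, 0, 0;
     ((-32953308230287794773) / 54182622237187500000), ((-12856006974147361) / 227050988422500000), (3785971766235727 / 8514412065843750), (144648284471 / 278085937500), 0, 0;
     (276358277901352957286491 / 355573458431542968750000), (259364926023249766337 / 1490022111522656250000), ((-77548560983913710893) / 111751658364199218750), ((-7718395418021203) / 7299755859375000), (4 / 5), 0;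
     (142587039076588046497259 / 355573458431542968750000), ((-109543196804131258417) / 135456555592968750000), (3548440671680883263 / 10159241669472656250), (426366079563703 / 7299755859375000), 0, (1 / 4)] := by
    show E⁻¹ * AI = _
    rw [hE]
    ext i j
    fin_cases i <;> fin_cases j <;>
      simp [AI, Matrix.mul_apply, Fin.sum_univ_six, Matrix.vecHead, Matrix.vecTail, Matrix.cons_val', Fin.isValue] <;> norm_num
  rw [hM]
  have key : x ⬝ᵥ (((1 : ℝ) / 2) • ((!![(3 / 4), 0, 0, 0, 0, 0;
     ((-5) / 4), (3 / 2), 0, 0, 0, 0;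
     (231 / 800), ((-1071) / 800), (1 / 2), 0, 0, 0;
     ((-32953308230287794773) / 54182622237187500000), ((-12856006974147361) / 227050988422500000), (3785971766235727 / 8514412065843750), (144648284471 / 278085937500), 0, 0;
     (276358277901352957286491 / 355573458431542968750000), (259364926023249766337 / 1490022111522656250000), ((-77548560983913710893) / 111751658364199218750), ((-7718395418021203) / 7299755859375000), (4 / 5), 0;
     (142587039076588046497259 / 355573458431542968750000), ((-109543196804131258417) / 135456555592968750000), (3548440671680883263 / 10159241669472656250), (426366079563703 / 7299755859375000), 0, (1 / 4)] : Matrix (Fin 6) (Fin 6) ℝ) + (!![(3 / 4), 0, 0, 0, 0, 0;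
     ((-5) / 4), (3 / 2), 0, 0, 0, 0;
     (231 / 800), ((-1071) / 800), (1 / 2), 0, 0, 0;
     ((-32953308230287794773) / 54182622237187500000), ((-12856006974147361) / 227050988422500000), (3785971766235727 / 8514412065843750), (144648284471 / 278085937500), 0, 0;
     (276358277901352957286491 / 355573458431542968750000), (259364926023249766337 / 1490022111522656250000), ((-77548560983913710893) / 111751658364199218750), ((-7718395418021203) / 7299755859375000), (4 / 5), 0;
     (142587039076588046497259 / 355573458431542968750000), ((-109543196804131258417) / 135456555592968750000), (3548440671680883263 / 10159241669472656250), (426366079563703 / 7299755859375000), 0, (1 / 4)] : Matrix (Fin 6) (Fin 6) ℝ)ᵀ)).mulVec x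
      = (3 / 4) * (x 0 + ((-5) / 6) * x 1 + (77 / 400) * x 2 + ((-32953308230287794773) / 81273933355781250000) * x 3 + (276358277901352957286491 / 533360187647314453125000) * x 4 + (142587039076588046497259 / 533360187647314453125000) * x 5)^2 + (47 / 48) * (x 1 + ((-5271) / 9400) * x 2 + ((-402982812501729929653) / 1400620784831296875000) * x 3 + (3856940573888119294112951 / 9191573900455385742187500) * x 4 + ((-202474030856425417516291) / 835597627314125976562500) * x 5)^2 + (308929 / 1880000) * (x 2 + (24589045391768268947471 / 32879360063613048046875) * x 3 + ((-1005188459670823344479630203) / 863083201669842511230468750) * x 4 + (1432753802648276924992973 / 78462109242712955566406250) * x 5)^2 + (383913134994192252122481203380055691954668749 / 1714684072762444390991890505873107910156250000) * (x 3 + ((-9881520249602553623602143012328222924961076471889) / 20155439587195093236430263177452923827620109322500) * x 4 + (3600070505319027261417522357896013532340451524389 / 20155439587195093236430263177452923827620109322500) * x 5)^2 + (632897134004253518646866404575855925218155877850161127 / 4232642313310969579650355267265114003800222957725000000) * (x 4 + (79449672566764987044437611300559867951977214352030373 / 632897134004253518646866404575855925218155877850161127) * x 5)^2 + (73680275778518874694118417294020234751408613175718507411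 / 569607420603828166782179764118270332696340290065145014300) * (x 5)^2 := by
    simp [Matrix.mulVec, dotProduct, Fin.sum_univ_six, Matrix.vecHead, Matrix.vecTail]
    ring
  rw [key]
  apply sos_pos _ _ _ _ _ _ _ _ _ _ _ _ (by norm_num) (by norm_num) (by norm_num)
    (by norm_num) (by norm_num) (by norm_num)
  by_contra h
  push_neg at h
  obtain ⟨h0, h1, h2, h3, h4, h5⟩ := h
  have g5 : x 5 = 0 := by linarith
  have g4 : x 4 = 0 := by linarith
  have g3 : x 3 = 0 := by linarith
  have g2 : x 2 = 0 := by linarith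
  have g1 : x 1 = 0 := by linarith
  have g0 : x 0 = 0 := by linarith
  apply hx
  funext i
  fin_cases i <;> assumption
end
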